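/- If 1<α<2, then for every b>0 the expected number of increments generated per run is infinite: Σ_{k≥1} p_k(b)·n_k = ∞. -/

import Mathlib

open MeasureTheory ProbabilityTheory Filter

noncomputable section

/-- Right tail `F̄(x) = F((x,∞))` of a measure on `ℝ`, as a real number. -/
def rtail (F : Measure ℝ) (x : ℝ) : ℝ := (F (Set.Ioi x)).toReal

/-- Integrated tail `F̄_I(x) = ∫_x^∞ F̄(u) du`. -/
def rtailI (F : Measure ℝ) (x : ℝ) : ℝ := ∫ u in Set.Ioi x, rtail F u

/-- `L` is slowly varying at infinity. -/
def SlowlyVarying (L : ℝ → ℝ) : Prop :=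
  ∀ t > 0, Tendsto (fun x => L (t * x) / L x) atTop (nhds 1)

/-- The block sizes `n_0 = 0`, `n_k = r^k` for `k ≥ 1`. -/
def nseq (r k : ℕ) : ℕ := if k = 0 then 0 else r ^ k

/-- The randomization probabilities
`p_k(b) = (F̄_I(b + n_{k-1}μ) − F̄_I(b + n_kμ)) / F̄_I(b)`. -/
def pk (F : Measure ℝ) (μ : ℝ) (r k : ℕ) (b : ℝ) : ℝ :=
  (rtailI F (b + (nseq r (k - 1) : ℝ) * μ) - rtailI F (b + (nseq r k : ℝ) * μ)) /
    rtailI F b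

/- ### Auxiliary lemmas -/

lemma rtail_nonneg (F : Measure ℝ) (x : ℝ) : 0 ≤ rtail F x := ENNReal.toReal_nonneg

lemma rtail_le_one (F : Measure ℝ) [IsProbabilityMeasure F] (x : ℝ) : rtail F x ≤ 1 := by
  have h : F (Set.Ioi x) ≤ 1 := prob_le_one
  calc rtail F x ≤ (1 : ENNReal).toReal := ENNReal.toReal_mono ENNReal.one_ne_top h
  _ = 1 := by simp

lemma rtail_anti (F : Measure ℝ) [IsProbabilityMeasure F] : Antitone (rtail F) :=
  fun _ _ hxy =>
    ENNReal.toReal_mono (measure_ne_top F _) (measure_mono (Set.Ioi_subset_Ioi hxy))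

lemma tail_ratio_tendsto (F : Measure ℝ) (α : ℝ) (L : ℝ → ℝ)
    (hLpos : ∀ x > 0, 0 < L x) (hL : SlowlyVarying L)
    (htail : ∀ x > 0, rtail F x = L x * x ^ (-α))
    {t : ℝ} (ht : 0 < t) :
    Tendsto (fun x => rtail F (t * x) / rtail F x) atTop (nhds (t ^ (-α))) := by
  have h1 : Tendsto (fun x => L (t * x) / L x * t ^ (-α)) atTop (nhds (t ^ (-α))) := by
    simpa using (hL t ht).mul_const (t ^ (-α))
  refine Tendsto.congr' ?_ h1
  filter_upwards [eventually_gt_atTop (0 : ℝ)] with x hx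
  have htx : 0 < t * x := mul_pos ht hx
  rw [htail _ htx, htail _ hx, Real.mul_rpow ht.le hx.le]
  have hLx : L x ≠ 0 := (hLpos x hx).ne'
  have hxp : x ^ (-α) ≠ 0 := (Real.rpow_pos_of_pos hx _).ne'
  field_simp

lemma rtail_pos (F : Measure ℝ) (α : ℝ) (L : ℝ → ℝ)
    (hLpos : ∀ x > 0, 0 < L x)
    (htail : ∀ x > 0, rtail F x = L x * x ^ (-α)) :
    ∀ x > (0:ℝ), 0 < rtail F x := fun x hx => by
  rw [htail x hx]
  exact mul_pos (hLpos x hx) (Real.rpow_pos_of_pos hx _)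

lemma rtail_integrableOn (F : Measure ℝ) [IsProbabilityMeasure F] (α : ℝ) (hα1 : 1 < α)
    (L : ℝ → ℝ) (hLpos : ∀ x > 0, 0 < L x) (hL : SlowlyVarying L)
    (htail : ∀ x > 0, rtail F x = L x * x ^ (-α))
    (r : ℕ) (hr : 1 < r) (b : ℝ) :
    IntegrableOn (rtail F) (Set.Ioi b) := by
  have hr' : (1:ℝ) < (r:ℝ) := by exact_mod_cast hr
  have hr0 : (0:ℝ) < (r:ℝ) := by linarith
  have hpos := rtail_pos F α L hLpos htail
  -- choose ρ with r^(-α) < ρ < r⁻¹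
  set ρ : ℝ := ((r:ℝ) ^ (-α) + (r:ℝ)⁻¹) / 2 with hρdef
  have hlt : (r:ℝ) ^ (-α) < (r:ℝ)⁻¹ := by
    rw [← Real.rpow_neg_one (r:ℝ)]
    exact Real.rpow_lt_rpow_of_exponent_lt hr' (by linarith)
  have hρ0 : 0 < ρ := by positivity
  have hρ1 : ρ < (r:ℝ)⁻¹ := by rw [hρdef]; linarith
  have hρlt1 : ρ < 1 := lt_trans hρ1 (by rw [inv_lt_one_iff₀]; right; exact hr')
  have hρgt : (r:ℝ) ^ (-α) < ρ := by rw [hρdef]; linarith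
  -- eventual ratio bound
  have hev : ∀ᶠ x in atTop, rtail F ((r:ℝ) * x) / rtail F x < ρ ∧ (1:ℝ) ≤ x :=
    ((tail_ratio_tendsto F α L hLpos hL htail hr0).eventually_lt_const hρgt).and
      (eventually_ge_atTop 1)
  obtain ⟨M, hM⟩ := eventually_atTop.mp hev
  have hM1 : (1:ℝ) ≤ M := (hM M le_rfl).2
  have hM0 : (0:ℝ) < M := by linarith
  have hstep : ∀ x, M ≤ x → rtail F ((r:ℝ) * x) ≤ ρ * rtail F x := by
    intro x hx
    have h1 := (hM x hx).1
    have h2 : 0 < rtail F x := hpos x (by linarith)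
    rw [div_lt_iff₀ h2] at h1
    linarith
  -- geometric decay along powers of r
  have key : ∀ n : ℕ, ∀ u : ℝ, (r:ℝ) ^ n * M ≤ u → rtail F u ≤ ρ ^ n := by
    intro n
    induction n with
    | zero => intro u _; simpa using rtail_le_one F u
    | succ m ih =>
      intro u hu
      have hrm : (1:ℝ) ≤ (r:ℝ) ^ m := one_le_pow₀ hr'.le
      have h1 : (r:ℝ) ^ m * M ≤ u / (r:ℝ) := by
        rw [le_div_iff₀ hr0]
        calc (r:ℝ) ^ m * M * (r:ℝ) = (r:ℝ) ^ (m+1) * M := by ring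
        _ ≤ u := hu
      have h2 : M ≤ u / (r:ℝ) := le_trans (by nlinarith) h1
      have h3 : rtail F ((r:ℝ) * (u / (r:ℝ))) ≤ ρ * rtail F (u / (r:ℝ)) := hstep _ h2
      rw [mul_div_cancel₀ u hr0.ne'] at h3
      calc rtail F u ≤ ρ * rtail F (u / (r:ℝ)) := h3
      _ ≤ ρ * ρ ^ m := mul_le_mul_of_nonneg_left (ih _ h1) hρ0.le
      _ = ρ ^ (m+1) := by ring
  -- polynomial bound
  set β : ℝ := -(Real.log ρ / Real.log (r:ℝ)) with hβdef
  have hlogr : 0 < Real.log (r:ℝ) := Real.log_pos hr'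
  have hβ1 : 1 < β := by
    have h1 : Real.log ρ < Real.log (r:ℝ)⁻¹ := Real.log_lt_log hρ0 hρ1
    rw [Real.log_inv] at h1
    rw [hβdef, lt_neg, div_lt_iff₀ hlogr]
    nlinarith
  have hbound : ∀ u : ℝ, M ≤ u → rtail F u ≤ (ρ⁻¹ * M ^ β) * u ^ (-β) := by
    intro u hu
    have hu0 : (0:ℝ) < u := by linarith
    have hy1 : (1:ℝ) ≤ u / M := (one_le_div hM0).2 hu
    have hy0 : (0:ℝ) < u / M := by linarith
    have hlb : 0 ≤ Real.logb (r:ℝ) (u / M) := Real.logb_nonneg hr' hy1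
    set n : ℕ := ⌊Real.logb (r:ℝ) (u / M)⌋₊ with hndef
    have hn_le : (n:ℝ) ≤ Real.logb (r:ℝ) (u / M) := Nat.floor_le hlb
    have hn_gt : Real.logb (r:ℝ) (u / M) < n + 1 := Nat.lt_floor_add_one _
    have hrn : (r:ℝ) ^ n ≤ u / M := by
      calc (r:ℝ) ^ n = (r:ℝ) ^ ((n:ℝ)) := by rw [Real.rpow_natCast]
      _ ≤ (r:ℝ) ^ (Real.logb (r:ℝ) (u / M)) :=
          Real.rpow_le_rpow_of_exponent_le hr'.le hn_le
      _ = u / M := Real.rpow_logb hr0 hr'.ne' hy0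
    have h1 : rtail F u ≤ ρ ^ n := key n u (by rw [← le_div_iff₀ hM0]; exact hrn)
    have h2 : ρ ^ n ≤ ρ⁻¹ * ρ ^ (Real.logb (r:ℝ) (u / M)) := by
      calc ρ ^ n = ρ ^ ((n:ℝ)) := by rw [Real.rpow_natCast]
      _ ≤ ρ ^ (Real.logb (r:ℝ) (u / M) - 1) :=
          Real.rpow_le_rpow_of_exponent_ge hρ0 hρlt1.le (by linarith)
      _ = ρ⁻¹ * ρ ^ (Real.logb (r:ℝ) (u / M)) := by
          rw [Real.rpow_sub hρ0, Real.rpow_one]; ring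
    have h3 : ρ ^ (Real.logb (r:ℝ) (u / M)) = (u / M) ^ (-β) := by
      rw [Real.rpow_def_of_pos hρ0, Real.rpow_def_of_pos hy0, Real.logb, hβdef]
      congr 1
      field_simp
    have h4 : (u / M) ^ (-β) = M ^ β * u ^ (-β) := by
      rw [Real.div_rpow hu0.le hM0.le, Real.rpow_neg hM0.le, div_eq_mul_inv, inv_inv]
      ring
    calc rtail F u ≤ ρ ^ n := h1
    _ ≤ ρ⁻¹ * ρ ^ (Real.logb (r:ℝ) (u / M)) := h2
    _ = (ρ⁻¹ * M ^ β) * u ^ (-β) := by rw [h3, h4]; ring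
  -- integrability on Ioi M
  have hmeas := (rtail_anti F).measurable
  have hintM : IntegrableOn (rtail F) (Set.Ioi M) := by
    have hg : IntegrableOn (fun u : ℝ => (ρ⁻¹ * M ^ β) * u ^ (-β)) (Set.Ioi M) :=
      (integrableOn_Ioi_rpow_of_lt (by linarith : -β < -1) hM0).const_mul _
    refine Integrable.mono' hg hmeas.aestronglyMeasurable ?_
    rw [ae_restrict_iff' measurableSet_Ioi]
    filter_upwards with u hu
    rw [Real.norm_eq_abs, abs_of_nonneg (rtail_nonneg F u)]
    exact hbound u (le_of_lt hu)
  -- integrability on the compact part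
  have hintc : IntegrableOn (rtail F) (Set.Ioc b M) := by
    refine Integrable.mono' (g := fun _ : ℝ => (1:ℝ))
      (integrableOn_const measure_Ioc_lt_top.ne) hmeas.aestronglyMeasurable ?_
    filter_upwards with u
    rw [Real.norm_eq_abs, abs_of_nonneg (rtail_nonneg F u)]
    exact rtail_le_one F u
  refine (hintc.union hintM).mono_set ?_
  intro u hu
  rcases le_or_gt u M with h | h
  · exact Or.inl ⟨hu, h⟩
  · exact Or.inr h

lemma rtailI_sub (F : Measure ℝ)
    (hint : ∀ c : ℝ, IntegrableOn (rtail F) (Set.Ioi c))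
    {x y : ℝ} (hxy : x ≤ y) :
    rtailI F x - rtailI F y = ∫ u in Set.Ioc x y, rtail F u := by
  have h := setIntegral_union (μ := volume) (f := rtail F)
      (Set.Ioc_disjoint_Ioi (le_refl y)) measurableSet_Ioi
      ((hint x).mono_set Set.Ioc_subset_Ioi_self) (hint y)
  rw [Set.Ioc_union_Ioi_eq_Ioi hxy] at h
  rw [rtailI, rtailI, h]; ring

lemma rtailI_sub_ge (F : Measure ℝ) [IsProbabilityMeasure F]
    (hint : ∀ c : ℝ, IntegrableOn (rtail F) (Set.Ioi c))
    {x y : ℝ} (hxy : x ≤ y) :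
    (y - x) * rtail F y ≤ rtailI F x - rtailI F y := by
  rw [rtailI_sub F hint hxy]
  have h1 : ∫ _ in Set.Ioc x y, rtail F y ≤ ∫ u in Set.Ioc x y, rtail F u := by
    refine setIntegral_mono_on ?_ ?_ measurableSet_Ioc ?_
    · exact integrableOn_const measure_Ioc_lt_top.ne
    · exact (hint x).mono_set Set.Ioc_subset_Ioi_self
    · exact fun u hu => rtail_anti F hu.2
  calc (y - x) * rtail F y = ∫ _ in Set.Ioc x y, rtail F y := by
        rw [setIntegral_const, Real.volume_real_Ioc_of_le hxy, smul_eq_mul]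
  _ ≤ _ := h1

lemma rtailI_pos (F : Measure ℝ) [IsProbabilityMeasure F]
    (hint : ∀ c : ℝ, IntegrableOn (rtail F) (Set.Ioi c))
    (hpos : ∀ x > (0:ℝ), 0 < rtail F x) {b : ℝ} (hb : 0 < b) : 0 < rtailI F b := by
  have h1 : (b + 1 - b) * rtail F (b + 1) ≤ rtailI F b - rtailI F (b + 1) :=
    rtailI_sub_ge F hint (by linarith)
  have h2 : 0 ≤ rtailI F (b + 1) :=
    setIntegral_nonneg measurableSet_Ioi fun u _ => rtail_nonneg F u
  have h3 : 0 < rtail F (b + 1) := hpos _ (by linarith)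
  nlinarith

/-- If `1 < α < 2`, then for every `b > 0` the expected number of increments generated per
run is infinite: `Σ_{k≥1} p_k(b) n_k = ∞` (i.e. the nonnegative series is not summable). -/
theorem stmt16
    (F : Measure ℝ) [IsProbabilityMeasure F]
    (α : ℝ) (hα1 : 1 < α) (hα2 : α < 2)
    (L : ℝ → ℝ) (hLpos : ∀ x > 0, 0 < L x) (hL : SlowlyVarying L)
    (htail : ∀ x > 0, rtail F x = L x * x ^ (-α))
    (μ : ℝ) (hμ : 0 < μ) (r : ℕ) (hr : 1 < r) :
    ∀ b > (0 : ℝ),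
      ¬ Summable (fun k : ℕ => pk F μ r (k + 1) b * (nseq r (k + 1) : ℝ)) := by
  intro b hb hsum
  have hr' : (1:ℝ) < (r:ℝ) := by exact_mod_cast hr
  have hr0 : (0:ℝ) < (r:ℝ) := by linarith
  have hr2 : (2:ℝ) ≤ (r:ℝ) := by exact_mod_cast hr
  have hpos := rtail_pos F α L hLpos htail
  have hint : ∀ c : ℝ, IntegrableOn (rtail F) (Set.Ioi c) :=
    rtail_integrableOn F α hα1 L hLpos hL htail r hr
  have hG : 0 < rtailI F b := rtailI_pos F hint hpos hb
  -- the comparison sequence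
  set u : ℕ → ℝ := fun k => ((r:ℝ) ^ (k+1)) ^ 2 * rtail F (b + (r:ℝ) ^ (k+1) * μ) with hu
  have hupos : ∀ k, 0 < u k := by
    intro k
    have : 0 < b + (r:ℝ) ^ (k+1) * μ := by positivity
    exact mul_pos (by positivity) (hpos _ this)
  -- cast facts for nseq
  have hnseq1 : ∀ k : ℕ, ((nseq r (k+1) : ℕ) : ℝ) = (r:ℝ) ^ (k+1) := by
    intro k; simp [nseq]
  have hnseq0 : ∀ k : ℕ, ((nseq r k : ℕ) : ℝ) ≤ (r:ℝ) ^ k := by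
    intro k
    rcases Nat.eq_zero_or_pos k with h | h
    · simp [nseq, h]
    · simp [nseq, Nat.pos_iff_ne_zero.mp h]
  have hgap : ∀ k : ℕ, (r:ℝ) ^ (k+1) / 2 ≤ (r:ℝ) ^ (k+1) - ((nseq r k : ℕ) : ℝ) := by
    intro k
    cases k with
    | zero => simp [nseq]
    | succ m =>
      have h1 : ((nseq r (m+1) : ℕ) : ℝ) = (r:ℝ) ^ (m+1) := hnseq1 m
      rw [h1]
      have h2 : (0:ℝ) ≤ (r:ℝ) ^ (m+1) := by positivity
      have h3 : (r:ℝ) ^ (m+2) = (r:ℝ) ^ (m+1) * (r:ℝ) := by ring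
      nlinarith
  -- lower bound for the summand
  have hsk : ∀ k : ℕ, μ / (2 * rtailI F b) * u k
      ≤ pk F μ r (k + 1) b * (nseq r (k + 1) : ℝ) := by
    intro k
    have hx0 : (0:ℝ) ≤ ((nseq r k : ℕ) : ℝ) := Nat.cast_nonneg _
    have hle : b + ((nseq r k : ℕ) : ℝ) * μ ≤ b + (r:ℝ) ^ (k+1) * μ := by
      have := hgap k
      have h4 : (0:ℝ) < (r:ℝ) ^ (k+1) := by positivity
      nlinarith
    have hdiff := rtailI_sub_ge F hint hle
    have hT : 0 < rtail F (b + (r:ℝ) ^ (k+1) * μ) := hpos _ (by positivity)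
    have hnum : (r:ℝ) ^ (k+1) / 2 * μ * rtail F (b + (r:ℝ) ^ (k+1) * μ)
        ≤ rtailI F (b + ((nseq r k : ℕ) : ℝ) * μ) - rtailI F (b + (r:ℝ) ^ (k+1) * μ) := by
      have h5 := hgap k
      have h6 := mul_le_mul_of_nonneg_right (mul_le_mul_of_nonneg_right h5 hμ.le) hT.le
      linarith
    rw [pk, Nat.add_sub_cancel, hnseq1 k]
    have hR : (0:ℝ) ≤ (r:ℝ) ^ (k+1) := by positivity
    have h6 : (r:ℝ) ^ (k+1) / 2 * μ * rtail F (b + (r:ℝ) ^ (k+1) * μ) * (r:ℝ) ^ (k+1)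
        ≤ (rtailI F (b + ((nseq r k : ℕ) : ℝ) * μ) - rtailI F (b + (r:ℝ) ^ (k+1) * μ))
          * (r:ℝ) ^ (k+1) := mul_le_mul_of_nonneg_right hnum hR
    have h7 := (div_le_div_iff_of_pos_right hG).mpr h6
    calc μ / (2 * rtailI F b) * u k
        = (r:ℝ) ^ (k+1) / 2 * μ * rtail F (b + (r:ℝ) ^ (k+1) * μ) * (r:ℝ) ^ (k+1)
          / rtailI F b := by
          rw [hu]; field_simp
    _ ≤ (rtailI F (b + ((nseq r k : ℕ) : ℝ) * μ) - rtailI F (b + (r:ℝ) ^ (k+1) * μ))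
          * (r:ℝ) ^ (k+1) / rtailI F b := h7
    _ = (rtailI F (b + ((nseq r k : ℕ) : ℝ) * μ) - rtailI F (b + (r:ℝ) ^ (k+1) * μ))
          / rtailI F b * (r:ℝ) ^ (k+1) := by ring
  -- the ratio constant
  set c : ℝ := (1 + (r:ℝ) ^ ((2:ℝ) - α)) / 2 with hc
  have hrα : 1 < (r:ℝ) ^ ((2:ℝ) - α) := by
    rw [Real.one_lt_rpow_iff_of_pos hr0]
    exact Or.inl ⟨hr', by linarith⟩
  have hc1 : 1 < c := by rw [hc]; linarith
  have hd : c / (r:ℝ) ^ 2 < (r:ℝ) ^ (-α) := by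
    rw [div_lt_iff₀ (by positivity)]
    have h1 : (r:ℝ) ^ (-α) * (r:ℝ) ^ (2:ℕ) = (r:ℝ) ^ ((2:ℝ) - α) := by
      rw [← Real.rpow_natCast (r:ℝ) 2, ← Real.rpow_add hr0]
      norm_num
      congr 1
      ring
    rw [h1]
    rw [hc]; linarith
  -- eventual geometric growth of u
  have hx_tendsto : Tendsto (fun k : ℕ => b + (r:ℝ) ^ (k+1) * μ) atTop atTop := by
    apply tendsto_atTop_add_const_left
    apply Tendsto.atTop_mul_const hμ
    exact (tendsto_pow_atTop_atTop_of_one_lt hr').comp (tendsto_add_atTop_nat 1)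
  have hev : ∀ᶠ k in atTop,
      c / (r:ℝ) ^ 2 < rtail F ((r:ℝ) * (b + (r:ℝ) ^ (k+1) * μ))
        / rtail F (b + (r:ℝ) ^ (k+1) * μ) :=
    hx_tendsto.eventually
      ((tail_ratio_tendsto F α L hLpos hL htail hr0).eventually_const_lt hd)
  have hstep : ∀ᶠ k in atTop, c * u k ≤ u (k+1) := by
    filter_upwards [hev] with k hk
    have hx0 : 0 < b + (r:ℝ) ^ (k+1) * μ := by positivity
    have hxx := hpos _ hx0
    rw [lt_div_iff₀ hxx] at hk
    have h1 : c / (r:ℝ) ^ 2 * rtail F (b + (r:ℝ) ^ (k+1) * μ)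
        ≤ rtail F ((r:ℝ) * (b + (r:ℝ) ^ (k+1) * μ)) := le_of_lt hk
    have h2 : rtail F ((r:ℝ) * (b + (r:ℝ) ^ (k+1) * μ))
        ≤ rtail F (b + (r:ℝ) ^ (k+2) * μ) := by
      apply rtail_anti F
      have : (r:ℝ) * (b + (r:ℝ) ^ (k+1) * μ) = (r:ℝ) * b + (r:ℝ) ^ (k+2) * μ := by ring
      rw [this]
      nlinarith
    calc c * u k
        = ((r:ℝ) ^ (k+2)) ^ 2 * (c / (r:ℝ) ^ 2 * rtail F (b + (r:ℝ) ^ (k+1) * μ)) := by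
          rw [hu]; field_simp; ring
    _ ≤ ((r:ℝ) ^ (k+2)) ^ 2 * rtail F ((r:ℝ) * (b + (r:ℝ) ^ (k+1) * μ)) :=
          mul_le_mul_of_nonneg_left h1 (by positivity)
    _ ≤ ((r:ℝ) ^ (k+2)) ^ 2 * rtail F (b + (r:ℝ) ^ (k+2) * μ) :=
          mul_le_mul_of_nonneg_left h2 (by positivity)
    _ = u (k+1) := by rw [hu]
  -- u tends to 0 by summability
  have hGne : rtailI F b ≠ 0 := hG.ne'
  have hub : ∀ k, u k ≤ 2 * rtailI F b / μ * (pk F μ r (k + 1) b * (nseq r (k + 1) : ℝ)) := by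
    intro k
    have h2 := mul_le_mul_of_nonneg_left (hsk k)
      (by positivity : (0:ℝ) ≤ 2 * rtailI F b / μ)
    calc u k = 2 * rtailI F b / μ * (μ / (2 * rtailI F b) * u k) := by
          field_simp
    _ ≤ _ := h2
  have hu0 : Tendsto u atTop (nhds 0) := by
    have h1 : Tendsto (fun k => 2 * rtailI F b / μ *
        (pk F μ r (k + 1) b * (nseq r (k + 1) : ℝ))) atTop (nhds 0) := by
      simpa using (hsum.tendsto_atTop_zero.const_mul (2 * rtailI F b / μ))
    exact tendsto_of_tendsto_of_tendsto_of_le_of_le tendsto_const_nhds h1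
      (fun k => (hupos k).le) hub
  -- contradiction
  obtain ⟨N, hN⟩ := eventually_atTop.mp hstep
  have hmono : ∀ k, N ≤ k → u N ≤ u k := by
    intro k
    induction k with
    | zero => intro h; simp at h; rw [h]
    | succ m ih =>
      intro h
      rcases Nat.lt_or_ge N (m+1) with h' | h'
      · have hm : N ≤ m := Nat.lt_succ_iff.mp h'
        have := hN m hm
        have := ih hm
        nlinarith [hupos m]
      · have : N = m + 1 := le_antisymm h h'
        rw [this]
  obtain ⟨k, hk1, hk2⟩ :=
    ((hu0.eventually_lt_const (hupos N)).and (eventually_ge_atTop N)).exists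
  exact absurd (hmono k hk2) (by linarith)
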